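/- Any derivation in HLJ + ℍ of a sequent (a hypersequent with a single component) can be transformed into a derivation of the same sequent in structured form, i.e., one in which all applications of external contraction (EC) occur in a queue immediately above the root, and every application of external weakening (EW) occurs in a queue immediately above a premiss G | Cᵢ of a rule (r) with more than one premiss, introducing components of the shared context G in such a way that each component of G is contained in at least one of the hypersequents G₁,…,Gₙ at the tops of those queues. -/

import Mathlib

/- Formulas of intuitionistic propositional logic -/
inductive Formula : Type
  | atom : ℕ → Formula
  | bot  : Formula
  | conj : Formula → Formula → Formula
  | disj : Formula → Formula → Formula
  | impl : Formula → Formula → Formula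

/-- A sequent Γ ⇒ Π. -/
abbrev Sequent : Type := Multiset Formula × Option Formula

/-- A hypersequent. -/
abbrev Hyper : Type := Multiset Sequent

/-- The data of one component of a hypersequent rule: the multiset Θ of
formulas added to the i-th active component Θ, Γᵢ ⇒ Πᵢ of the conclusion,
and the premiss-multisets Σ (one active premiss Σ, Γᵢ ⇒ Πᵢ for each). -/
structure CompRule : Type where
  concl : Multiset Formula
  prems : List (Multiset Formula)

/-- A hypersequent rule: external-context sharing, one active component in
each premiss; the premisses attached to `comps[i]` are the premisses linked
to the i-th component of the conclusion. -/
structure HypRule : Type where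
  comps : List CompRule

/-- The rules of HLJ other than external weakening and external contraction
(axioms, logical rules, internal structural rules and cut, each with a
shared hypersequent context G), as a relation between the list of premisses
and the conclusion. -/
inductive HBase : List Hyper → Hyper → Prop
  | ax (φ : Formula) : HBase [] {(({φ} : Multiset Formula), some φ)}
  | botL (Δ : Option Formula) : HBase [] {(({Formula.bot} : Multiset Formula), Δ)}
  | disjL {G : Hyper} {Γ : Multiset Formula} {Δ : Option Formula} (φ ψ : Formula) :
      HBase [(φ ::ₘ Γ, Δ) ::ₘ G, (ψ ::ₘ Γ, Δ) ::ₘ G] ((Formula.disj φ ψ ::ₘ Γ, Δ) ::ₘ G)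
  | disjR1 {G : Hyper} {Γ : Multiset Formula} (φ ψ : Formula) :
      HBase [(Γ, some φ) ::ₘ G] ((Γ, some (Formula.disj φ ψ)) ::ₘ G)
  | disjR2 {G : Hyper} {Γ : Multiset Formula} (φ ψ : Formula) :
      HBase [(Γ, some ψ) ::ₘ G] ((Γ, some (Formula.disj φ ψ)) ::ₘ G)
  | conjL {G : Hyper} {Γ : Multiset Formula} {Δ : Option Formula} (φ ψ : Formula) :
      HBase [(φ ::ₘ ψ ::ₘ Γ, Δ) ::ₘ G] ((Formula.conj φ ψ ::ₘ Γ, Δ) ::ₘ G)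
  | conjR {G : Hyper} {Γ : Multiset Formula} (φ ψ : Formula) :
      HBase [(Γ, some φ) ::ₘ G, (Γ, some ψ) ::ₘ G] ((Γ, some (Formula.conj φ ψ)) ::ₘ G)
  | implL {G : Hyper} {Γ : Multiset Formula} {Δ : Option Formula} (φ ψ : Formula) :
      HBase [(Γ, some φ) ::ₘ G, (ψ ::ₘ Γ, Δ) ::ₘ G] ((Formula.impl φ ψ ::ₘ Γ, Δ) ::ₘ G)
  | implR {G : Hyper} {Γ : Multiset Formula} (φ ψ : Formula) :
      HBase [(φ ::ₘ Γ, some ψ) ::ₘ G] ((Γ, some (Formula.impl φ ψ)) ::ₘ G)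
  | iw {G : Hyper} {Γ : Multiset Formula} {Δ : Option Formula} (φ : Formula) :
      HBase [(Γ, Δ) ::ₘ G] ((φ ::ₘ Γ, Δ) ::ₘ G)
  | ic {G : Hyper} {Γ : Multiset Formula} {Δ : Option Formula} (φ : Formula) :
      HBase [(φ ::ₘ φ ::ₘ Γ, Δ) ::ₘ G] ((φ ::ₘ Γ, Δ) ::ₘ G)
  | cut {G : Hyper} {Γ Γ' : Multiset Formula} {Δ : Option Formula} (φ : Formula) :
      HBase [(Γ, some φ) ::ₘ G, (φ ::ₘ Γ', Δ) ::ₘ G] ((Γ + Γ', Δ) ::ₘ G)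

/-- Labels of rule applications in an HLJ + ℍ derivation: external
contraction, external weakening, a rule of HLJ, or a rule of ℍ. -/
inductive HLab : Type
  | ec : HLab
  | ew : HLab
  | lj : HLab
  | hyp : HLab

/-- Derivation trees for HLJ + ℍ. -/
inductive HTree : Type
  | node : HLab → Hyper → List HTree → HTree

def HTree.lab : HTree → HLab
  | .node l _ _ => l

def HTree.concl : HTree → Hyper
  | .node _ h _ => h

def HTree.children : HTree → List HTree
  | .node _ _ ts => ts

/-- `IsHDeriv HR t` : the tree `t` is a correct derivation in HLJ + ℍ
(for ℍ = `HR` a set of hypersequent rules). -/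
inductive IsHDeriv (HR : Set HypRule) : HTree → Prop
  | lj {h : Hyper} {ts : List HTree} :
      HBase (ts.map HTree.concl) h →
      (∀ u ∈ ts, IsHDeriv HR u) →
      IsHDeriv HR (HTree.node HLab.lj h ts)
  | hyp (hr : HypRule) (hmem : hr ∈ HR) (G : Hyper)
      (ctx : List (Multiset Formula × Option Formula))
      (hlen : ctx.length = hr.comps.length) {ts : List HTree} :
      ts.map HTree.concl =
        ((hr.comps.zip ctx).map
          (fun pr => pr.1.prems.map (fun p => ((p + pr.2.1, pr.2.2) ::ₘ G)))).flatten →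
      (∀ u ∈ ts, IsHDeriv HR u) →
      IsHDeriv HR (HTree.node HLab.hyp
        ((((hr.comps.zip ctx).map fun pr => (pr.1.concl + pr.2.1, pr.2.2) :
          List Sequent) : Multiset Sequent) + G) ts)
  | ew {u : HTree} (s : Sequent) :
      IsHDeriv HR u → IsHDeriv HR (HTree.node HLab.ew (s ::ₘ u.concl) [u])
  | ec {u : HTree} (G : Hyper) (s : Sequent) :
      u.concl = s ::ₘ s ::ₘ G →
      IsHDeriv HR u → IsHDeriv HR (HTree.node HLab.ec (s ::ₘ G) [u])

/-- `QueueTo t v` : the derivation `t` consists of a (possibly empty) queue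
of external weakening (EW) applications above `v`, whose last rule is not
(EW). -/
inductive QueueTo : HTree → HTree → Prop
  | base {t : HTree} : t.lab ≠ HLab.ew → QueueTo t t
  | step {u v : HTree} {h : Hyper} : QueueTo u v → QueueTo (HTree.node HLab.ew h [u]) v

/-- `SB t` : `t` is a structured body, i.e. a derivation containing no (EC)
application, in which every (EW) application occurs in a queue immediately
above a premiss G | Cᵢ of a rule (r) with more than one premiss, and for
every such rule application each component of the shared context G is
contained in at least one of the hypersequents Gᵢ at the tops of those
queues (where the top of the i-th queue is Gᵢ | Cᵢ). -/
inductive SB : HTree → Prop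
  | small {l : HLab} {h : Hyper} {ts : List HTree} :
      l ≠ HLab.ec → l ≠ HLab.ew → ts.length ≤ 1 →
      (∀ u ∈ ts, SB u) →
      SB (HTree.node l h ts)
  | big {l : HLab} {h : Hyper} {ts : List HTree} :
      l ≠ HLab.ec → l ≠ HLab.ew → 2 ≤ ts.length →
      (∀ u ∈ ts, ∃ v : HTree, QueueTo u v) →
      (∀ u ∈ ts, ∀ v : HTree, QueueTo u v → SB v) →
      (∃ (G : Hyper) (Cs : List Sequent), Cs.length = ts.length ∧
        ts.map HTree.concl = Cs.map (fun C => C ::ₘ G) ∧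
        ∀ s ∈ G, ∃ pr ∈ ts.zip Cs, ∃ (v : HTree) (Gv : Hyper),
          QueueTo pr.1 v ∧ v.concl = pr.2 ::ₘ Gv ∧ s ∈ Gv) →
      SB (HTree.node l h ts)

/-- A derivation is in structured form iff all (EC) applications occur in a
queue immediately above the root and the rest of the derivation is a
structured body. -/
inductive StructuredForm : HTree → Prop
  | ofSB {t : HTree} : SB t → StructuredForm t
  | ecStep {u : HTree} {h : Hyper} :
      StructuredForm u → StructuredForm (HTree.node HLab.ec h [u])


deriving instance DecidableEq for Formula

section Infra

variable {HR : Set HypRule}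

/-- a derivation which is a structured body -/
def Der (HR : Set HypRule) (z : HTree) : Prop := IsHDeriv HR z ∧ SB z

/-- `X` is the conclusion of some SB derivation -/
def RR (HR : Set HypRule) (X : Hyper) : Prop := ∃ z, Der HR z ∧ z.concl = X

/-- there is an SB derivation of a nonempty hypersequent all of whose
components occur in `H` -/
def DOK (HR : Set HypRule) (H : Hyper) : Prop :=
  ∃ X, RR HR X ∧ X ≠ 0 ∧ ∀ y ∈ X, y ∈ H

lemma SB.lab_ne_ew {z : HTree} (h : SB z) : z.lab ≠ HLab.ew := by
  cases h with
  | small _ h2 _ _ => exact h2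
  | big _ h2 _ _ _ _ => exact h2

lemma ewchain {z : HTree} (hz : IsHDeriv HR z) (hl : z.lab ≠ HLab.ew)
    (P : Multiset Sequent) :
    ∃ e, IsHDeriv HR e ∧ e.concl = P + z.concl ∧ QueueTo e z ∧
      (∀ v, QueueTo e v → v = z) ∧ (P = 0 → e = z) := by
  induction P using Multiset.induction_on with
  | empty =>
    refine ⟨z, hz, by simp, QueueTo.base hl, ?_, fun _ => rfl⟩
    intro v hv
    cases hv with
    | base _ => rfl
    | step h => exact absurd rfl hl
  | cons a P ih =>
    obtain ⟨e, he, hc, hq, hu, -⟩ := ih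
    refine ⟨HTree.node HLab.ew (a ::ₘ e.concl) [e], IsHDeriv.ew a he, ?_, QueueTo.step hq,
      ?_, ?_⟩
    · show a ::ₘ e.concl = (a ::ₘ P) + z.concl
      rw [hc, Multiset.cons_add]
    · intro v hv
      cases hv with
      | base hb => exact absurd rfl hb
      | step h' => exact hu v h'
    · intro h; exact absurd h (by simp)

/-- union of a list of multisets -/
def bigU (l : List (Multiset Sequent)) : Multiset Sequent := l.foldr (· ∪ ·) 0

lemma le_bigU {l : List (Multiset Sequent)} {Y : Multiset Sequent} (h : Y ∈ l) :
    Y ≤ bigU l := by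
  induction l with
  | nil => simp at h
  | cons a l ih =>
    rcases List.mem_cons.1 h with h | h
    · subst h; exact Multiset.le_union_left
    · exact (ih h).trans (Multiset.le_union_right)

lemma bigU_le {l : List (Multiset Sequent)} {m : Multiset Sequent}
    (h : ∀ Y ∈ l, Y ≤ m) : bigU l ≤ m := by
  induction l with
  | nil => simp [bigU]
  | cons a l ih =>
    exact Multiset.union_le (h a (by simp)) (ih fun Y hY => h Y (by simp [hY]))

lemma mem_bigU {l : List (Multiset Sequent)} {y : Sequent} (h : y ∈ bigU l) :
    ∃ Y ∈ l, y ∈ Y := by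
  induction l with
  | nil => simp [bigU] at h
  | cons a l ih =>
    rcases Multiset.mem_union.1 h with h | h
    · exact ⟨a, by simp, h⟩
    · obtain ⟨Y, h1, h2⟩ := ih h
      exact ⟨Y, by simp [h1], h2⟩

lemma count_bigU_le {l : List (Multiset Sequent)} {w : Sequent} {m : ℕ}
    (h : ∀ Y ∈ l, Multiset.count w Y ≤ m) : Multiset.count w (bigU l) ≤ m := by
  induction l with
  | nil => simp [bigU]
  | cons a l ih =>
    show Multiset.count w (a ∪ bigU l) ≤ m
    rw [Multiset.count_union]
    exact max_le (h a (by simp)) (ih fun Y hY => h Y (by simp [hY]))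

lemma count_le_bigU {l : List (Multiset Sequent)} {Y : Multiset Sequent} {w : Sequent}
    (h : Y ∈ l) : Multiset.count w Y ≤ Multiset.count w (bigU l) :=
  Multiset.count_le_of_le w (le_bigU h)

end Infra
section Step

variable {HR : Set HypRule}

lemma SSTEP (lab : HLab) (h1 : lab ≠ HLab.ec) (h2 : lab ≠ HLab.ew)
    (Bs : List Sequent) (Ds : Multiset Sequent)
    (App : ∀ (CTX : Hyper) (ts : List HTree),
      ts.map HTree.concl = Bs.map (· ::ₘ CTX) → (∀ u ∈ ts, IsHDeriv HR u) →
      IsHDeriv HR (HTree.node lab (Ds + CTX) ts))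
    (Xf : Fin Bs.length → Hyper)
    (hX : ∀ i, RR HR (Xf i) ∧ Bs.get i ∈ Xf i) :
    RR HR (Ds + bigU (List.ofFn fun i => (Xf i).erase (Bs.get i))) := by
  set Y : Fin Bs.length → Hyper := fun i => (Xf i).erase (Bs.get i) with hYdef
  set CTX := bigU (List.ofFn Y) with hCTXdef
  have hz : ∀ i, ∃ z, (IsHDeriv HR z ∧ SB z) ∧ z.concl = Xf i := fun i => (hX i).1
  choose z hzd hzc using hz
  have hXi : ∀ i, Xf i = Bs.get i ::ₘ Y i := fun i => (Multiset.cons_erase (hX i).2).symm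
  have hYle : ∀ i, Y i ≤ CTX := fun i => le_bigU (List.mem_ofFn.2 ⟨i, rfl⟩)
  clear_value Y CTX
  rcases Nat.lt_or_ge Bs.length 2 with hn | hn
  · -- small case : 0 or 1 premisses
    rcases Nat.lt_or_ge Bs.length 1 with h0 | h0
    · -- no premisses
      have hB0 : Bs.length = 0 := by omega
      have hofn : (List.ofFn Y) = [] := by
        apply List.eq_nil_of_length_eq_zero; simp [hB0]
      have hCTX0 : CTX = 0 := by rw [hCTXdef, hofn]; rfl
      have hmap : ([] : List HTree).map HTree.concl = Bs.map (· ::ₘ CTX) := by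
        have : Bs = [] := List.eq_nil_of_length_eq_zero hB0
        simp [this]
      exact ⟨HTree.node lab (Ds + CTX) [], ⟨App CTX [] hmap (by simp),
        SB.small h1 h2 (by simp) (by simp)⟩, rfl⟩
    · -- one premiss
      have hB1 : Bs.length = 1 := by omega
      let i₀ : Fin Bs.length := ⟨0, by omega⟩
      have hia : ∀ i : Fin Bs.length, i = i₀ := by
        intro i
        apply Fin.ext
        have h0' : (i₀ : ℕ) = 0 := rfl
        omega
      have hCTX1 : CTX = Y i₀ := by
        rw [hCTXdef]
        refine le_antisymm (bigU_le ?_) (le_bigU (List.mem_ofFn.2 ⟨i₀, rfl⟩))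
        intro Y' hY'
        obtain ⟨i, rfl⟩ := List.mem_ofFn.1 hY'
        rw [hia i]
      have hmap : ([z i₀]).map HTree.concl = Bs.map (· ::ₘ CTX) := by
        apply List.ext_getElem (by simp [hB1])
        intro i hi hi'
        have hi0 : i = 0 := by simp at hi; omega
        subst hi0
        simp only [List.getElem_map, List.getElem_cons_zero]
        have hb0 : Bs[0] = Bs.get i₀ := rfl
        rw [hb0, hzc, hXi i₀, hCTX1]
      refine ⟨HTree.node lab (Ds + CTX) [z i₀], ⟨App CTX [z i₀] hmap ?_,
        SB.small h1 h2 (by simp) ?_⟩, rfl⟩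
      · intro u hu; simp at hu; subst hu; exact (hzd i₀).1
      · intro u hu; simp at hu; subst hu; exact (hzd i₀).2
  · -- at least two premisses
    have chain : ∀ i, ∃ e, IsHDeriv HR e ∧ e.concl = Bs.get i ::ₘ CTX ∧
        QueueTo e (z i) ∧ (∀ v, QueueTo e v → v = z i) := by
      intro i
      obtain ⟨e, he, hc, hq, hu, -⟩ := ewchain (hzd i).1 ((hzd i).2.lab_ne_ew) (CTX - Y i)
      refine ⟨e, he, ?_, hq, hu⟩
      rw [hc, hzc, hXi i, Multiset.add_cons, tsub_add_cancel_of_le (hYle i)]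
    choose e hed hec heq heu using chain
    set ts := List.ofFn e with hts
    have hmap : ts.map HTree.concl = Bs.map (· ::ₘ CTX) := by
      apply List.ext_getElem (by simp [hts])
      intro i hi hi'
      have hiB : i < Bs.length := hi'.trans_eq (by simp)
      simp only [hts, List.getElem_map, List.getElem_ofFn]
      rw [hec ⟨i, hiB⟩]
      rfl
    have hder : ∀ u ∈ ts, IsHDeriv HR u := by
      intro u hu
      obtain ⟨i, rfl⟩ := List.mem_ofFn.1 hu
      exact hed i
    have hlents : ts.length = Bs.length := by simp [hts]
    refine ⟨HTree.node lab (Ds + CTX) ts, ⟨App CTX ts hmap hder,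
      SB.big h1 h2 (by omega) ?_ ?_ ?_⟩, rfl⟩
    · intro u hu
      obtain ⟨i, rfl⟩ := List.mem_ofFn.1 hu
      exact ⟨z i, heq i⟩
    · intro u hu v hv
      obtain ⟨i, rfl⟩ := List.mem_ofFn.1 hu
      rw [heu i v hv]
      exact (hzd i).2
    · refine ⟨CTX, Bs, by omega, hmap, ?_⟩
      intro s hs
      rw [hCTXdef] at hs
      obtain ⟨Y', hY', hsY⟩ := mem_bigU hs
      obtain ⟨i, rfl⟩ := List.mem_ofFn.1 hY'
      have hilt : (i : ℕ) < (ts.zip Bs).length := by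
        rw [List.length_zip]; omega
      have hget : (ts.zip Bs)[(i : ℕ)] = (e i, Bs.get i) := by
        simp [hts, List.getElem_zip, List.getElem_ofFn]
      refine ⟨(e i, Bs.get i), ?_, z i, Y i, heq i, ?_, hsY⟩
      · rw [← hget]; exact List.getElem_mem hilt
      · rw [hzc, hXi i]

end Step
section Aux

variable {HR : Set HypRule}

/-- counts bounded by `E` on the tracked set `U`, with one extra copy allowed
at the distinguished component `a` -/
def Eb (U : Set Sequent) (E : Sequent → ℕ) (X : Hyper) (a : Sequent) : Prop :=
  ∀ w ∈ U, Multiset.count w X ≤ E w + (if w = a then 1 else 0)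

lemma AUX (lab : HLab) (h1 : lab ≠ HLab.ec) (h2 : lab ≠ HLab.ew)
    (Bs : List Sequent) (Ds : Multiset Sequent)
    (App : ∀ (CTX : Hyper) (ts : List HTree),
      ts.map HTree.concl = Bs.map (· ::ₘ CTX) → (∀ u ∈ ts, IsHDeriv HR u) →
      IsHDeriv HR (HTree.node lab (Ds + CTX) ts)) :
    ∀ (m : ℕ) (T U : Set Sequent) (E : Sequent → ℕ) (W : Finset Sequent)
      (p : Sequent → Hyper),
      (∑ b ∈ W, Multiset.count b (p b)) ≤ m →
      (∀ y ∈ Ds, y ∈ T) →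
      (∀ w ∈ U, Multiset.count w Ds = 0) →
      (∀ b ∈ W, b ∉ T) →
      (∀ i : Fin Bs.length, Bs.get i ∈ T ∨ Bs.get i ∈ W) →
      (∀ b ∈ W, ∃ i : Fin Bs.length, Bs.get i = b) →
      (∀ i : Fin Bs.length, Bs.get i ∈ T →
        ∃ X, RR HR X ∧ Bs.get i ∈ X ∧ (∀ y ∈ X, y ∈ T) ∧ Eb U E X (Bs.get i)) →
      (∀ b ∈ W, RR HR (p b) ∧ b ∈ p b ∧ (∀ y ∈ p b, y = b ∨ y ∈ T) ∧ Eb U E (p b) b) →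
      ((∃ X, RR HR X ∧ Ds ≤ X ∧ (∀ y ∈ X, y ∈ T) ∧ ∀ w ∈ U, Multiset.count w X ≤ E w) ∧
       (∀ b ∈ W, ∃ X, RR HR X ∧ Multiset.count b X = 1 ∧ (∀ y ∈ X, y = b ∨ y ∈ T) ∧
         Eb U E X b)) := by
  intro m
  induction m using Nat.strong_induction_on with
  | _ m IH =>
  intro T U E W p hm hDsT hDsU hWT hslot hWex hq hp
  by_cases hbig : ∃ b ∈ W, 2 ≤ Multiset.count b (p b)
  · -- inductive case : some provider has at least two copies of its value
    obtain ⟨b₀, hb₀W, hc₀2⟩ := hbig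
    set c₀ := Multiset.count b₀ (p b₀) with hc₀def
    have hb₀T : b₀ ∉ T := hWT b₀ hb₀W
    have hb₀E : ∀ w ∈ U, Multiset.count w (p b₀) ≤ E w + (if w = b₀ then 1 else 0) :=
      (hp b₀ hb₀W).2.2.2
    have hDsb₀ : Multiset.count b₀ Ds = 0 := by
      rw [Multiset.count_eq_zero]
      intro hmem
      exact hb₀T (hDsT b₀ hmem)
    have hsum_ge : c₀ ≤ ∑ b ∈ W, Multiset.count b (p b) :=
      Finset.single_le_sum (f := fun b => Multiset.count b (p b))
        (fun _ _ => Nat.zero_le _) hb₀W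
    have hm2 : 2 ≤ m := le_trans (le_trans hc₀2 hsum_ge) hm
    -- recursive call with b₀ made good
    have hsum' : (∑ b ∈ W.erase b₀, Multiset.count b (p b)) ≤ m - 2 := by
      have h : (∑ b ∈ W.erase b₀, Multiset.count b (p b)) + c₀
          = ∑ b ∈ W, Multiset.count b (p b) := by
        rw [hc₀def]
        simpa using Finset.sum_erase_add W (fun b => Multiset.count b (p b)) hb₀W
      omega
    have IHa := IH (m - 2) (by omega) (insert b₀ T) (insert b₀ U)
        (Function.update E b₀ (c₀ - 1)) (W.erase b₀) p hsum'
        (fun y hy => Set.mem_insert_of_mem _ (hDsT y hy))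
        ?_ ?_ ?_ ?_ ?_ ?_
    rotate_left
    · -- Ds has zero count on insert b₀ U
      intro w hw
      rcases Set.mem_insert_iff.1 hw with hw | hw
      · rw [hw]; exact hDsb₀
      · exact hDsU w hw
    · -- erased W avoids insert b₀ T
      intro b hb hbT'
      obtain ⟨hbne, hbW⟩ := Finset.mem_erase.1 hb
      rcases Set.mem_insert_iff.1 hbT' with h | h
      · exact hbne h
      · exact hWT b hbW h
    · -- slots
      intro i
      rcases hslot i with h | h
      · exact Or.inl (Set.mem_insert_of_mem _ h)
      · by_cases hib : Bs.get i = b₀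
        · exact Or.inl (hib ▸ Set.mem_insert _ _)
        · exact Or.inr (Finset.mem_erase.2 ⟨hib, h⟩)
    · exact fun b hb => hWex b (Finset.mem_erase.1 hb).2
    · -- providers for good slots (w.r.t. insert b₀ T)
      intro i hiT'
      by_cases hiT : Bs.get i ∈ T
      · obtain ⟨X, hX1, hX2, hX3, hX4⟩ := hq i hiT
        refine ⟨X, hX1, hX2, fun y hy => Set.mem_insert_of_mem _ (hX3 y hy), ?_⟩
        intro w hw
        by_cases hwb : w = b₀
        · have : Multiset.count w X = 0 := by
            rw [Multiset.count_eq_zero]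
            intro hmem
            exact hb₀T (hwb ▸ hX3 w hmem)
          omega
        · rcases Set.mem_insert_iff.1 hw with h | h
          · exact absurd h hwb
          · have := hX4 w h
            rw [Function.update_of_ne hwb]
            exact this
      · have hib : Bs.get i = b₀ := by
          rcases hslot i with h | h
          · exact absurd h hiT
          · rcases Set.mem_insert_iff.1 hiT' with h' | h'
            · exact h'
            · exact absurd h' hiT
        rw [hib]
        refine ⟨p b₀, (hp b₀ hb₀W).1, (hp b₀ hb₀W).2.1, ?_, ?_⟩
        · intro y hy
          rcases (hp b₀ hb₀W).2.2.1 y hy with h | h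
          · exact h ▸ Set.mem_insert _ _
          · exact Set.mem_insert_of_mem _ h
        · intro w hw
          by_cases hwb : w = b₀
          · rw [hwb, Function.update_self, if_pos rfl, ← hc₀def]
            omega
          · rcases Set.mem_insert_iff.1 hw with h | h
            · exact absurd h hwb
            · have := hb₀E w h
              rw [Function.update_of_ne hwb]
              exact this
    · -- providers for remaining bad values
      intro b hb
      obtain ⟨hbne, hbW⟩ := Finset.mem_erase.1 hb
      obtain ⟨hR, hmem, hpure, hEb⟩ := hp b hbW
      refine ⟨hR, hmem, ?_, ?_⟩
      · intro y hy
        rcases hpure y hy with h | h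
        · exact Or.inl h
        · exact Or.inr (Set.mem_insert_of_mem _ h)
      · intro w hw
        by_cases hwb : w = b₀
        · have : Multiset.count w (p b) = 0 := by
            rw [Multiset.count_eq_zero]
            intro hmem'
            rcases hpure w hmem' with h | h
            · exact hbne (h.symm.trans hwb)
            · exact hb₀T (hwb ▸ h)
          omega
        · rcases Set.mem_insert_iff.1 hw with h | h
          · exact absurd h hwb
          · have := hEb w h
            rw [Function.update_of_ne hwb]
            exact this
    obtain ⟨-, hC2'⟩ := IHa
    -- build the improved provider for b₀
    have hprovs : ∀ i : Fin Bs.length, ∃ X, RR HR X ∧ Bs.get i ∈ X ∧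
        (∀ y ∈ X.erase (Bs.get i), y = b₀ ∨ y ∈ T) ∧
        (Multiset.count b₀ (X.erase (Bs.get i)) ≤ c₀ - 1) ∧
        (∀ w ∈ U, Multiset.count w (X.erase (Bs.get i)) ≤ E w) ∧
        (Bs.get i = b₀ → X = p b₀) := by
      intro i
      by_cases hib : Bs.get i = b₀
      · refine ⟨p b₀, (hp b₀ hb₀W).1, hib ▸ (hp b₀ hb₀W).2.1, ?_, ?_, ?_, fun _ => rfl⟩
        · intro y hy
          exact hib ▸ (hp b₀ hb₀W).2.2.1 y (Multiset.mem_of_mem_erase hy)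
        · rw [hib, Multiset.count_erase_self, ← hc₀def]
        · intro w hw
          have hEb := hb₀E w hw
          by_cases hwb : w = b₀
          · subst hwb
            rw [hib, Multiset.count_erase_self]
            rw [if_pos rfl] at hEb
            omega
          · rw [hib, Multiset.count_erase_of_ne hwb]
            rw [if_neg hwb] at hEb
            omega
      · by_cases hiT : Bs.get i ∈ T
        · obtain ⟨X, hX1, hX2, hX3, hX4⟩ := hq i hiT
          refine ⟨X, hX1, hX2, ?_, ?_, ?_, fun h => absurd h hib⟩
          · intro y hy
            exact Or.inr (hX3 y (Multiset.mem_of_mem_erase hy))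
          · have : Multiset.count b₀ X = 0 := by
              rw [Multiset.count_eq_zero]
              intro hmem
              exact hb₀T (hX3 b₀ hmem)
            have hle : Multiset.count b₀ (X.erase (Bs.get i)) ≤ Multiset.count b₀ X :=
              Multiset.count_le_of_le _ (Multiset.erase_le _ _)
            omega
          · intro w hw
            have hEb := hX4 w hw
            by_cases hwb : w = Bs.get i
            · subst hwb
              rw [Multiset.count_erase_self]
              rw [if_pos rfl] at hEb
              omega
            · rw [Multiset.count_erase_of_ne hwb]
              rw [if_neg hwb] at hEb
              omega
        · have hiW' : Bs.get i ∈ W.erase b₀ := by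
            refine Finset.mem_erase.2 ⟨hib, ?_⟩
            exact (hslot i).resolve_left hiT
          obtain ⟨X, hX1, hX2, hX3, hX4⟩ := hC2' (Bs.get i) hiW'
          have hXmem : Bs.get i ∈ X := Multiset.count_pos.1 (by omega)
          refine ⟨X, hX1, hXmem, ?_, ?_, ?_, fun h => absurd h hib⟩
          · intro y hy
            by_cases hyb : y = Bs.get i
            · exfalso
              have hpos := Multiset.count_pos.2 hy
              rw [hyb, Multiset.count_erase_self, hX2] at hpos
              omega
            · rcases hX3 y (Multiset.mem_of_mem_erase hy) with h | h
              · exact absurd h hyb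
              · rcases Set.mem_insert_iff.1 h with h' | h'
                · exact Or.inl h'
                · exact Or.inr h'
          · have hb₀U' : (b₀ : Sequent) ∈ insert b₀ U := Set.mem_insert _ _
            have hX4' := hX4 b₀ hb₀U'
            have hne : ¬ (b₀ = Bs.get i) := fun h => hib h.symm
            rw [if_neg hne, Function.update_self] at hX4'
            have hle : Multiset.count b₀ (X.erase (Bs.get i)) ≤ Multiset.count b₀ X :=
              Multiset.count_le_of_le _ (Multiset.erase_le _ _)
            omega
          · intro w hw
            have hEb := hX4 w (Set.mem_insert_of_mem _ hw)
            by_cases hwb₀ : w = b₀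
            · subst hwb₀
              have hne : ¬ (w = Bs.get i) := fun h => hib h.symm
              rw [if_neg hne, Function.update_self] at hEb
              have hle : Multiset.count w (X.erase (Bs.get i)) ≤ Multiset.count w X :=
                Multiset.count_le_of_le _ (Multiset.erase_le _ _)
              have hE' := hb₀E w hw
              rw [if_pos rfl] at hE'
              omega
            · rw [Function.update_of_ne hwb₀] at hEb
              by_cases hwb : w = Bs.get i
              · rw [hwb, Multiset.count_erase_self]
                rw [if_pos hwb] at hEb
                omega
              · rw [Multiset.count_erase_of_ne hwb]
                rw [if_neg hwb] at hEb
                omega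
    choose Xf hXf1 hXf2 hXf3 hXf4 hXf5 hXf6 using hprovs
    have hstepX := SSTEP lab h1 h2 Bs Ds App Xf (fun i => ⟨hXf1 i, hXf2 i⟩)
    set X₀ := Ds + bigU (List.ofFn fun i => (Xf i).erase (Bs.get i)) with hX₀def
    obtain ⟨i₀, hi₀⟩ := hWex b₀ hb₀W
    have hX₀cnt : Multiset.count b₀ X₀ = c₀ - 1 := by
      rw [hX₀def, Multiset.count_add, hDsb₀]
      have hle : Multiset.count b₀ (bigU (List.ofFn fun i => (Xf i).erase (Bs.get i)))
          ≤ c₀ - 1 := by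
        apply count_bigU_le
        intro Y' hY'
        obtain ⟨i, rfl⟩ := List.mem_ofFn.1 hY'
        exact hXf4 i
      have hge : c₀ - 1 ≤
          Multiset.count b₀ (bigU (List.ofFn fun i => (Xf i).erase (Bs.get i))) := by
        have hmem : (Xf i₀).erase (Bs.get i₀) ∈
            (List.ofFn fun i => (Xf i).erase (Bs.get i)) := List.mem_ofFn.2 ⟨i₀, rfl⟩
        have := count_le_bigU (w := b₀) hmem
        have heq : Multiset.count b₀ ((Xf i₀).erase (Bs.get i₀)) = c₀ - 1 := by
          rw [hXf6 i₀ hi₀, hi₀, Multiset.count_erase_self, ← hc₀def]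
        omega
      omega
    have hX₀pure : ∀ y ∈ X₀, y = b₀ ∨ y ∈ T := by
      intro y hy
      rw [hX₀def] at hy
      rcases Multiset.mem_add.1 hy with hy | hy
      · exact Or.inr (hDsT y hy)
      · obtain ⟨Y', hY', hyY⟩ := mem_bigU hy
        obtain ⟨i, rfl⟩ := List.mem_ofFn.1 hY'
        exact hXf3 i y hyY
    have hX₀E : ∀ w ∈ U, Multiset.count w X₀ ≤ E w := by
      intro w hw
      rw [hX₀def, Multiset.count_add, hDsU w hw]
      simp only [Nat.zero_add]
      apply count_bigU_le
      intro Y' hY'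
      obtain ⟨i, rfl⟩ := List.mem_ofFn.1 hY'
      exact hXf5 i w hw
    have hX₀mem : b₀ ∈ X₀ := Multiset.count_pos.1 (by omega)
    -- re-enter with the smaller provider
    have hsum'' : (∑ b ∈ W, Multiset.count b (Function.update p b₀ X₀ b)) ≤ m - 1 := by
      have h1' : (∑ b ∈ W, Multiset.count b (Function.update p b₀ X₀ b)) =
          Multiset.count b₀ X₀ + ∑ b ∈ W.erase b₀, Multiset.count b (p b) := by
        rw [← Finset.add_sum_erase W _ hb₀W, Function.update_self]
        congr 1
        apply Finset.sum_congr rfl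
        intro b hb
        rw [Function.update_of_ne (Finset.mem_erase.1 hb).1]
      have h2' : (∑ b ∈ W.erase b₀, Multiset.count b (p b)) + c₀
          = ∑ b ∈ W, Multiset.count b (p b) := by
        rw [hc₀def]
        simpa using Finset.sum_erase_add W (fun b => Multiset.count b (p b)) hb₀W
      omega
    exact IH (m - 1) (by omega) T U E W (Function.update p b₀ X₀) hsum''
      hDsT hDsU hWT hslot hWex hq
      (by
        intro b hb
        by_cases hbb : b = b₀
        · subst hbb
          rw [Function.update_self]
          exact ⟨hstepX, hX₀mem, hX₀pure, fun w hw => le_trans (hX₀E w hw) (by omega)⟩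
        · rw [Function.update_of_ne hbb]
          exact hp b hb)
  · -- base case : every provider is a unit
    have hone : ∀ b ∈ W, Multiset.count b (p b) = 1 := by
      intro b hb
      have h1' : 0 < Multiset.count b (p b) := Multiset.count_pos.2 (hp b hb).2.1
      have h2' : ¬ 2 ≤ Multiset.count b (p b) := fun h => hbig ⟨b, hb, h⟩
      omega
    constructor
    · -- combine all unit providers in one step
      have hprovs : ∀ i : Fin Bs.length, ∃ X, RR HR X ∧ Bs.get i ∈ X ∧
          (∀ y ∈ X.erase (Bs.get i), y ∈ T) ∧
          (∀ w ∈ U, Multiset.count w (X.erase (Bs.get i)) ≤ E w) := by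
        intro i
        by_cases h : Bs.get i ∈ T
        · obtain ⟨X, hX1, hX2, hX3, hX4⟩ := hq i h
          refine ⟨X, hX1, hX2, ?_, ?_⟩
          · intro y hy
            exact hX3 y (Multiset.mem_of_mem_erase hy)
          · intro w hw
            have hEb := hX4 w hw
            by_cases hwb : w = Bs.get i
            · subst hwb
              rw [Multiset.count_erase_self]
              rw [if_pos rfl] at hEb
              omega
            · rw [Multiset.count_erase_of_ne hwb]
              rw [if_neg hwb] at hEb
              omega
        · have hW : Bs.get i ∈ W := (hslot i).resolve_left h
          refine ⟨p (Bs.get i), (hp _ hW).1, (hp _ hW).2.1, ?_, ?_⟩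
          · intro y hy
            by_cases hyb : y = Bs.get i
            · exfalso
              have hpos := Multiset.count_pos.2 hy
              rw [hyb, Multiset.count_erase_self, hone _ hW] at hpos
              omega
            · rcases (hp _ hW).2.2.1 y (Multiset.mem_of_mem_erase hy) with h' | h'
              · exact absurd h' hyb
              · exact h'
          · intro w hw
            have hEb := (hp _ hW).2.2.2 w hw
            by_cases hwb : w = Bs.get i
            · subst hwb
              rw [Multiset.count_erase_self]
              rw [if_pos rfl] at hEb
              omega
            · rw [Multiset.count_erase_of_ne hwb]
              rw [if_neg hwb] at hEb
              omega
      choose Xf hXf1 hXf2 hXf3 hXf4 using hprovs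
      refine ⟨_, SSTEP lab h1 h2 Bs Ds App Xf (fun i => ⟨hXf1 i, hXf2 i⟩),
        self_le_add_right _ _, ?_, ?_⟩
      · intro y hy
        rcases Multiset.mem_add.1 hy with hy | hy
        · exact hDsT y hy
        · obtain ⟨Y', hY', hyY⟩ := mem_bigU hy
          obtain ⟨i, rfl⟩ := List.mem_ofFn.1 hY'
          exact hXf3 i y hyY
      · intro w hw
        rw [Multiset.count_add, hDsU w hw]
        simp only [Nat.zero_add]
        apply count_bigU_le
        intro Y' hY'
        obtain ⟨i, rfl⟩ := List.mem_ofFn.1 hY'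
        exact hXf4 i w hw
    · intro b hb
      exact ⟨p b, (hp b hb).1, hone b hb, (hp b hb).2.2.1, (hp b hb).2.2.2⟩

end Aux
section Wrap

variable {HR : Set HypRule}

lemma hyp_ne_ec : HLab.hyp ≠ HLab.ec := fun h => HLab.noConfusion h
lemma hyp_ne_ew : HLab.hyp ≠ HLab.ew := fun h => HLab.noConfusion h
lemma lj_ne_ec : HLab.lj ≠ HLab.ec := fun h => HLab.noConfusion h
lemma lj_ne_ew : HLab.lj ≠ HLab.ew := fun h => HLab.noConfusion h

lemma ruleDOK (lab : HLab) (h1 : lab ≠ HLab.ec) (h2 : lab ≠ HLab.ew)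
    (Bs : List Sequent) (Ds : Multiset Sequent) (G₀ : Hyper)
    (App : ∀ (CTX : Hyper) (ts : List HTree),
      ts.map HTree.concl = Bs.map (· ::ₘ CTX) → (∀ u ∈ ts, IsHDeriv HR u) →
      IsHDeriv HR (HTree.node lab (Ds + CTX) ts))
    (hDs0 : Ds ≠ 0)
    (hprov : ∀ b ∈ Bs, DOK HR (b ::ₘ G₀)) : DOK HR (Ds + G₀) := by
  classical
  set T : Set Sequent := {y | y ∈ Ds + G₀} with hT
  by_cases hcl : ∃ X, RR HR X ∧ X ≠ 0 ∧ ∀ y ∈ X, y ∈ T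
  · obtain ⟨X, hX1, hX2, hX3⟩ := hcl
    exact ⟨X, hX1, hX2, hX3⟩
  · have hprov2 : ∀ b ∈ Bs, ∃ X, RR HR X ∧ b ∈ X ∧ ∀ y ∈ X, y = b ∨ y ∈ T := by
      intro b hb
      obtain ⟨X, hX1, hX2, hX3⟩ := hprov b hb
      have hpure : ∀ y ∈ X, y = b ∨ y ∈ T := by
        intro y hy
        rcases Multiset.mem_cons.1 (hX3 y hy) with h | h
        · exact Or.inl h
        · exact Or.inr (show y ∈ Ds + G₀ from Multiset.mem_add.2 (Or.inr h))
      by_cases hmem : b ∈ X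
      · exact ⟨X, hX1, hmem, hpure⟩
      · exfalso
        apply hcl
        refine ⟨X, hX1, hX2, ?_⟩
        intro y hy
        rcases hpure y hy with h | h
        · exact absurd (h ▸ hy) hmem
        · exact h
    set W : Finset Sequent := Bs.toFinset.filter (fun b => b ∉ T) with hWdef
    set p : Sequent → Hyper := fun b =>
      if h : ∃ X, RR HR X ∧ b ∈ X ∧ ∀ y ∈ X, y = b ∨ y ∈ T then h.choose else 0 with hpdef
    have hDsT : ∀ y ∈ Ds, y ∈ T := fun y hy =>
      show y ∈ Ds + G₀ from Multiset.mem_add.2 (Or.inl hy)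
    have hDsU : ∀ w ∈ (∅ : Set Sequent), Multiset.count w Ds = 0 := by
      intro w hw; simp at hw
    have hWT : ∀ b ∈ W, b ∉ T := by
      intro b hb; exact (Finset.mem_filter.1 hb).2
    have hslot : ∀ i : Fin Bs.length, Bs.get i ∈ T ∨ Bs.get i ∈ W := by
      intro i
      by_cases h : Bs.get i ∈ T
      · exact Or.inl h
      · exact Or.inr (Finset.mem_filter.2 ⟨List.mem_toFinset.2 (Bs.get_mem i), h⟩)
    have hWex : ∀ b ∈ W, ∃ i : Fin Bs.length, Bs.get i = b := by
      intro b hb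
      have : b ∈ Bs := List.mem_toFinset.1 (Finset.mem_filter.1 hb).1
      exact List.mem_iff_get.1 this
    have hq : ∀ i : Fin Bs.length, Bs.get i ∈ T →
        ∃ X, RR HR X ∧ Bs.get i ∈ X ∧ (∀ y ∈ X, y ∈ T) ∧
          Eb ∅ (fun _ => 0) X (Bs.get i) := by
      intro i hiT
      obtain ⟨X', hX1', hX2', hX3'⟩ := hprov2 _ (Bs.get_mem i)
      refine ⟨X', hX1', hX2', ?_, by intro w hw; simp at hw⟩
      intro y hy
      rcases hX3' y hy with h | h
      · exact h ▸ hiT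
      · exact h
    have hp : ∀ b ∈ W, RR HR (p b) ∧ b ∈ p b ∧ (∀ y ∈ p b, y = b ∨ y ∈ T) ∧
        Eb ∅ (fun _ => 0) (p b) b := by
      intro b hb
      have hbBs : b ∈ Bs := List.mem_toFinset.1 (Finset.mem_filter.1 hb).1
      have hex := hprov2 b hbBs
      rw [hpdef]; simp only [dif_pos hex]
      obtain ⟨hA, hB, hC⟩ := hex.choose_spec
      exact ⟨hA, hB, hC, by intro w hw; simp at hw⟩
    obtain ⟨⟨X, hX1, hX2, hX3, -⟩, -⟩ := AUX lab h1 h2 Bs Ds App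
      (∑ b ∈ W, Multiset.count b (p b)) T ∅ (fun _ => 0) W p le_rfl
      hDsT hDsU hWT hslot hWex hq hp
    exact ⟨X, hX1, fun hX0 => hDs0 (Multiset.le_zero.1 (hX0 ▸ hX2)), hX3⟩

lemma DegDOK (hdeg : ∃ hr ∈ HR, hr.comps = []) (H : Hyper) (hH : H ≠ 0) :
    DOK HR H := by
  obtain ⟨hr, hmem, hc⟩ := hdeg
  obtain ⟨x, hx⟩ := Multiset.exists_mem_of_ne_zero hH
  have hldn : ([] : List (Multiset Formula × Option Formula)).length = hr.comps.length := by
    simp [hc]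
  have hd := IsHDeriv.hyp (HR := HR) hr hmem ({x} : Hyper) [] hldn (ts := [])
    (by simp) (by simp)
  have hcc : ((((hr.comps.zip ([] : List (Multiset Formula × Option Formula))).map
      fun pr => ((pr.1.concl + pr.2.1, pr.2.2) : Sequent)) : List Sequent) :
        Multiset Sequent) + ({x} : Hyper) = ({x} : Hyper) := by
    simp
  rw [hcc] at hd
  refine ⟨{x}, ⟨HTree.node HLab.hyp {x} [], ⟨hd, SB.small hyp_ne_ec hyp_ne_ew (by simp)
    (by intro u hu; simp at hu)⟩, rfl⟩, by simp, ?_⟩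
  intro y hy
  rw [Multiset.mem_singleton.1 hy]
  exact hx

end Wrap
section Main

variable {HR : Set HypRule}

lemma kidsDOK {ts : List HTree}
    (ih : ∀ u ∈ ts, (u.concl = 0 ∧ ∃ hr ∈ HR, hr.comps = []) ∨ DOK HR u.concl)
    {Bs : List Sequent} {G₀ : Hyper}
    (hmap : ts.map HTree.concl = Bs.map (· ::ₘ G₀)) :
    ∀ b ∈ Bs, DOK HR (b ::ₘ G₀) := by
  intro b hb
  have hmem : (b ::ₘ G₀) ∈ ts.map HTree.concl := by
    rw [hmap]; exact List.mem_map_of_mem hb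
  obtain ⟨u, hu, hcu⟩ := List.mem_map.1 hmem
  rcases ih u hu with ⟨h0, -⟩ | hd
  · rw [hcu] at h0; exact absurd h0 (Multiset.cons_ne_zero)
  · rw [← hcu]; exact hd

lemma singDOK (C : Sequent) (G : Hyper) (hd : DOK HR (({C} : Multiset Sequent) + G)) :
    DOK HR (C ::ₘ G) := by
  rwa [Multiset.singleton_add] at hd

lemma MAININD {t : HTree} (h : IsHDeriv HR t) :
    (t.concl = 0 ∧ ∃ hr ∈ HR, hr.comps = []) ∨ DOK HR t.concl := by
  induction h with
  | lj hbase hall ih =>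
    right
    rename_i h ts
    show DOK HR h
    generalize hPs : List.map HTree.concl ts = Ps at hbase
    cases hbase with
    | ax φ =>
      refine ⟨{(({φ} : Multiset Formula), some φ)},
        ⟨HTree.node HLab.lj {(({φ} : Multiset Formula), some φ)} [],
          ⟨IsHDeriv.lj (by simpa using HBase.ax φ) (by intro u hu; simp at hu),
           SB.small lj_ne_ec lj_ne_ew (by simp) (by intro u hu; simp at hu)⟩, rfl⟩,
        by simp, fun y hy => hy⟩
    | botL Δ =>
      refine ⟨{(({Formula.bot} : Multiset Formula), Δ)},
        ⟨HTree.node HLab.lj {(({Formula.bot} : Multiset Formula), Δ)} [],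
          ⟨IsHDeriv.lj (by simpa using HBase.botL Δ) (by intro u hu; simp at hu),
           SB.small lj_ne_ec lj_ne_ew (by simp) (by intro u hu; simp at hu)⟩, rfl⟩,
        by simp, fun y hy => hy⟩
    | disjL φ ψ =>
      rename_i G Γ Δ
      apply singDOK
      apply ruleDOK HLab.lj lj_ne_ec lj_ne_ew
        [((φ ::ₘ Γ, Δ) : Sequent), ((ψ ::ₘ Γ, Δ) : Sequent)] _ G ?_ (by simp)
        (kidsDOK ih (by rw [hPs]; rfl))
      intro CTX ts' hmap hall'
      rw [Multiset.singleton_add]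
      exact IsHDeriv.lj (by rw [hmap]; exact HBase.disjL φ ψ) hall'
    | disjR1 φ ψ =>
      rename_i G Γ
      apply singDOK
      apply ruleDOK HLab.lj lj_ne_ec lj_ne_ew [((Γ, some φ) : Sequent)] _ G ?_ (by simp)
        (kidsDOK ih (by rw [hPs]; rfl))
      intro CTX ts' hmap hall'
      rw [Multiset.singleton_add]
      exact IsHDeriv.lj (by rw [hmap]; exact HBase.disjR1 φ ψ) hall'
    | disjR2 φ ψ =>
      rename_i G Γ
      apply singDOK
      apply ruleDOK HLab.lj lj_ne_ec lj_ne_ew [((Γ, some ψ) : Sequent)] _ G ?_ (by simp)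
        (kidsDOK ih (by rw [hPs]; rfl))
      intro CTX ts' hmap hall'
      rw [Multiset.singleton_add]
      exact IsHDeriv.lj (by rw [hmap]; exact HBase.disjR2 φ ψ) hall'
    | conjL φ ψ =>
      rename_i G Γ Δ
      apply singDOK
      apply ruleDOK HLab.lj lj_ne_ec lj_ne_ew [((φ ::ₘ ψ ::ₘ Γ, Δ) : Sequent)] _ G ?_
        (by simp) (kidsDOK ih (by rw [hPs]; rfl))
      intro CTX ts' hmap hall'
      rw [Multiset.singleton_add]
      exact IsHDeriv.lj (by rw [hmap]; exact HBase.conjL φ ψ) hall'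
    | conjR φ ψ =>
      rename_i G Γ
      apply singDOK
      apply ruleDOK HLab.lj lj_ne_ec lj_ne_ew
        [((Γ, some φ) : Sequent), ((Γ, some ψ) : Sequent)] _ G ?_ (by simp)
        (kidsDOK ih (by rw [hPs]; rfl))
      intro CTX ts' hmap hall'
      rw [Multiset.singleton_add]
      exact IsHDeriv.lj (by rw [hmap]; exact HBase.conjR φ ψ) hall'
    | implL φ ψ =>
      rename_i G Γ Δ
      apply singDOK
      apply ruleDOK HLab.lj lj_ne_ec lj_ne_ew
        [((Γ, some φ) : Sequent), ((ψ ::ₘ Γ, Δ) : Sequent)] _ G ?_ (by simp)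
        (kidsDOK ih (by rw [hPs]; rfl))
      intro CTX ts' hmap hall'
      rw [Multiset.singleton_add]
      exact IsHDeriv.lj (by rw [hmap]; exact HBase.implL φ ψ) hall'
    | implR φ ψ =>
      rename_i G Γ
      apply singDOK
      apply ruleDOK HLab.lj lj_ne_ec lj_ne_ew [((φ ::ₘ Γ, some ψ) : Sequent)] _ G ?_
        (by simp) (kidsDOK ih (by rw [hPs]; rfl))
      intro CTX ts' hmap hall'
      rw [Multiset.singleton_add]
      exact IsHDeriv.lj (by rw [hmap]; exact HBase.implR φ ψ) hall'
    | iw φ =>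
      rename_i G Γ Δ
      apply singDOK
      apply ruleDOK HLab.lj lj_ne_ec lj_ne_ew [((Γ, Δ) : Sequent)] _ G ?_ (by simp)
        (kidsDOK ih (by rw [hPs]; rfl))
      intro CTX ts' hmap hall'
      rw [Multiset.singleton_add]
      exact IsHDeriv.lj (by rw [hmap]; exact HBase.iw φ) hall'
    | ic φ =>
      rename_i G Γ Δ
      apply singDOK
      apply ruleDOK HLab.lj lj_ne_ec lj_ne_ew [((φ ::ₘ φ ::ₘ Γ, Δ) : Sequent)] _ G ?_
        (by simp) (kidsDOK ih (by rw [hPs]; rfl))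
      intro CTX ts' hmap hall'
      rw [Multiset.singleton_add]
      exact IsHDeriv.lj (by rw [hmap]; exact HBase.ic φ) hall'
    | cut φ =>
      rename_i G Γ Γ' Δ
      apply singDOK
      apply ruleDOK HLab.lj lj_ne_ec lj_ne_ew
        [((Γ, some φ) : Sequent), ((φ ::ₘ Γ', Δ) : Sequent)] _ G ?_ (by simp)
        (kidsDOK ih (by rw [hPs]; rfl))
      intro CTX ts' hmap hall'
      rw [Multiset.singleton_add]
      exact IsHDeriv.lj (by rw [hmap]; exact HBase.cut φ) hall'
  | hyp hr hmem G ctx hlen hts hall ih =>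
    by_cases hc : hr.comps = []
    · have hdeg : ∃ hr' ∈ HR, hr'.comps = [] := ⟨hr, hmem, hc⟩
      by_cases h0 : ((((hr.comps.zip ctx).map fun pr =>
          ((pr.1.concl + pr.2.1, pr.2.2) : Sequent)) : List Sequent) :
            Multiset Sequent) + G = 0
      · exact Or.inl ⟨h0, hdeg⟩
      · exact Or.inr (DegDOK hdeg _ h0)
    · right
      rename_i ts
      set Bs := ((hr.comps.zip ctx).map
        (fun pr => pr.1.prems.map (fun p => ((p + pr.2.1, pr.2.2) : Sequent)))).flatten
        with hBs
      set Ds := ((((hr.comps.zip ctx).map fun pr =>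
        ((pr.1.concl + pr.2.1, pr.2.2) : Sequent)) : List Sequent) : Multiset Sequent)
        with hDs
      have KEY : ∀ (CTX : Hyper),
          ((hr.comps.zip ctx).map
            (fun pr => pr.1.prems.map (fun p => ((p + pr.2.1, pr.2.2) ::ₘ CTX)))).flatten
          = Bs.map (· ::ₘ CTX) := by
        intro CTX
        rw [hBs, List.map_flatten, List.map_map]
        refine congrArg List.flatten (List.map_congr_left ?_)
        intro pr _
        simp [List.map_map, Function.comp]
      have happ : ∀ (CTX : Hyper) (ts' : List HTree),
          ts'.map HTree.concl = Bs.map (· ::ₘ CTX) → (∀ u ∈ ts', IsHDeriv HR u) →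
          IsHDeriv HR (HTree.node HLab.hyp (Ds + CTX) ts') := by
        intro CTX ts' hmap hall'
        exact IsHDeriv.hyp hr hmem CTX ctx hlen (hmap.trans (KEY CTX).symm) hall'
      have hDs0 : Ds ≠ 0 := by
        intro h0
        rw [hDs, Multiset.coe_eq_zero, List.map_eq_nil_iff] at h0
        apply hc
        have hlen0 := congrArg List.length h0
        rw [List.length_zip, hlen, min_self] at hlen0
        exact List.eq_nil_of_length_eq_zero hlen0
      have hd := ruleDOK HLab.hyp hyp_ne_ec hyp_ne_ew Bs Ds G happ hDs0
        (kidsDOK ih (hts.trans (KEY G)))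
      exact hd
  | ew s hu ih =>
    right
    rcases ih with ⟨h0, hdeg⟩ | hd
    · exact DegDOK hdeg _ (Multiset.cons_ne_zero)
    · obtain ⟨X, hX1, hX2, hX3⟩ := hd
      exact ⟨X, hX1, hX2, fun y hy => Multiset.mem_cons_of_mem (hX3 y hy)⟩
  | ec G s hcu hu ih =>
    right
    rcases ih with ⟨h0, -⟩ | hd
    · rw [hcu] at h0; exact absurd h0 (Multiset.cons_ne_zero)
    · obtain ⟨X, hX1, hX2, hX3⟩ := hd
      refine ⟨X, hX1, hX2, ?_⟩
      intro y hy
      have hm := hX3 y hy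
      rw [hcu] at hm
      rcases Multiset.mem_cons.1 hm with h' | h'
      · exact h' ▸ Multiset.mem_cons_self _ _
      · rcases Multiset.mem_cons.1 h' with h'' | h''
        · exact h'' ▸ Multiset.mem_cons_self _ _
        · exact Multiset.mem_cons_of_mem h''
  
end Main

section Final

variable {HR : Set HypRule}

lemma ECQ (s : Sequent) : ∀ (k : ℕ) (z : HTree), IsHDeriv HR z → StructuredForm z →
    Multiset.card z.concl ≤ k → z.concl ≠ 0 → (∀ y ∈ z.concl, y = s) →
    ∃ t', IsHDeriv HR t' ∧ t'.concl = {s} ∧ StructuredForm t' := by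
  intro k
  induction k with
  | zero =>
    intro z _ _ hcard hne _
    exact absurd (Multiset.card_eq_zero.1 (le_antisymm hcard (Nat.zero_le _))) hne
  | succ k ihk =>
    intro z hd hsf hcard hne hall
    have hrep : z.concl = Multiset.replicate (Multiset.card z.concl) s :=
      Multiset.eq_replicate_card.2 hall
    rcases Nat.lt_or_ge (Multiset.card z.concl) 2 with h2 | h2
    · have hpos : 0 < Multiset.card z.concl := Multiset.card_pos.2 hne
      have h1 : Multiset.card z.concl = 1 := by omega
      refine ⟨z, hd, ?_, hsf⟩
      rw [hrep, h1, Multiset.replicate_one]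
    · obtain ⟨n, hn⟩ : ∃ n, Multiset.card z.concl = n + 2 :=
        ⟨Multiset.card z.concl - 2, by omega⟩
      have hcc : z.concl = s ::ₘ s ::ₘ Multiset.replicate n s := by
        rw [hrep, hn]
        simp [Multiset.replicate_succ]
      have hz' : IsHDeriv HR (HTree.node HLab.ec (s ::ₘ Multiset.replicate n s) [z]) :=
        IsHDeriv.ec _ s hcc hd
      apply ihk (HTree.node HLab.ec (s ::ₘ Multiset.replicate n s) [z]) hz'
        (StructuredForm.ecStep hsf) ?_ ?_ ?_
      · show Multiset.card (s ::ₘ Multiset.replicate n s) ≤ k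
        rw [Multiset.card_cons, Multiset.card_replicate]
        omega
      · show (s ::ₘ Multiset.replicate n s) ≠ 0
        exact Multiset.cons_ne_zero
      · intro y hy
        have hy' : y ∈ s ::ₘ Multiset.replicate n s := hy
        rcases Multiset.mem_cons.1 hy' with h' | h'
        · exact h'
        · exact Multiset.eq_of_mem_replicate h'

end Final

/-- Lemma (normal form of hypersequent derivations): any HLJ + ℍ derivation
of a sequent (a hypersequent with a single component) can be transformed
into a derivation of the same sequent in structured form. -/
theorem to_structured_form (HR : Set HypRule) (t : HTree) (s : Sequent)
    (hder : IsHDeriv HR t) (hconcl : t.concl = {s}) :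
    ∃ t' : HTree, IsHDeriv HR t' ∧ t'.concl = {s} ∧ StructuredForm t' := by
  rcases MAININD hder with ⟨h0, -⟩ | hdok
  · rw [hconcl] at h0
    exact absurd h0 (by simp)
  · rw [hconcl] at hdok
    obtain ⟨X, ⟨z, ⟨hdz, hsz⟩, hcz⟩, hne, hsub⟩ := hdok
    have hall : ∀ y ∈ z.concl, y = s := by
      intro y hy
      rw [hcz] at hy
      exact Multiset.mem_singleton.1 (hsub y hy)
    exact ECQ s (Multiset.card z.concl) z hdz (StructuredForm.ofSB hsz) le_rfl
      (by rw [hcz]; exact hne) hall
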